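/- Let $\Sigma = -\mathbf{a}\mathbf{a}^\intercal/(2d)$ for a unit vector $\mathbf{a} \in \mathbb{R}^d$, let $\Sigma'$ be a real symmetric $d \times d$ matrix, and let $\mathbf{b}$ be a real unit eigenvector of $\Sigma'$ corresponding to its smallest eigenvalue. Then $(1 - (\mathbf{a} \cdot \mathbf{b})^2)^{1/2} \leq 4d \, \|\Sigma' - \Sigma\|_{\mathrm{op}}$, and consequently, after possibly replacing $\mathbf{b}$ by $-\mathbf{b}$, one has $|\mathbf{a} - \mathbf{b}|^2 \leq 32 d^2 \|\Sigma' - \Sigma\|_{\mathrm{op}}^2$ (assuming $16 d^2 \|\Sigma' - \Sigma\|_{\mathrm{op}}^2 \leq 1$). -/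

import Mathlib

open Finset Matrix

/-- The ℓ²→ℓ² operator (spectral) norm of a real square matrix. -/
noncomputable def matrixOpNorm {d : ℕ} (M : Matrix (Fin d) (Fin d) ℝ) : ℝ :=
  ‖LinearMap.toContinuousLinearMap (Matrix.toEuclideanLin M)‖

lemma opBound {d : ℕ} (M : Matrix (Fin d) (Fin d) ℝ) (v : Fin d → ℝ) :
    Real.sqrt (∑ i, (M.mulVec v i)^2) ≤ matrixOpNorm M * Real.sqrt (∑ i, v i ^ 2) := by
  have h := (LinearMap.toContinuousLinearMap (Matrix.toEuclideanLin M)).le_opNorm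
    ((WithLp.equiv 2 (Fin d → ℝ)).symm v)
  have hn : ∀ w : Fin d → ℝ, ‖(WithLp.equiv 2 (Fin d → ℝ)).symm w‖ = Real.sqrt (∑ i, w i ^ 2) := by
    intro w
    rw [EuclideanSpace.norm_eq]
    congr 1
    exact Finset.sum_congr rfl fun i _ => by simp [sq_abs]
  have happ : (LinearMap.toContinuousLinearMap (Matrix.toEuclideanLin M))
      ((WithLp.equiv 2 (Fin d → ℝ)).symm v) = (WithLp.equiv 2 (Fin d → ℝ)).symm (M.mulVec v) := by
    simp [Matrix.toEuclideanLin_toLp]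
  rw [happ, hn, hn] at h
  exact h

lemma sqSumBound {d : ℕ} (M : Matrix (Fin d) (Fin d) ℝ) (v : Fin d → ℝ)
    (hv : ∑ i, v i ^ 2 = 1) : ∑ i, (M.mulVec v i)^2 ≤ matrixOpNorm M ^ 2 := by
  have h := opBound M v
  rw [hv, Real.sqrt_one, mul_one] at h
  have h3 : 0 ≤ ∑ i, (M.mulVec v i)^2 := by positivity
  nlinarith [Real.sq_sqrt h3, Real.sqrt_nonneg (∑ i, (M.mulVec v i)^2)]

set_option maxHeartbeats 2000000 in
/-- a Davis–Kahan-type bound.  With `Σ = -aaᵀ/(2d)` and `b` a unit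
eigenvector of the smallest eigenvalue of the symmetric matrix `Σ'`, one has
`√(1 - (a·b)²) ≤ 4d ‖Σ' - Σ‖_op`, and (when `16 d² ‖Σ'-Σ‖² ≤ 1`) after possibly
replacing `b` by `-b`, `|a - b|² ≤ 32 d² ‖Σ' - Σ‖_op²`. -/
theorem stmt10 (d : ℕ) (hd : 1 ≤ d) (a : Fin d → ℝ) (ha : ∑ i, a i ^ 2 = 1)
    (S' : Matrix (Fin d) (Fin d) ℝ) (hS' : S'.IsSymm)
    (b : Fin d → ℝ) (hb : ∑ i, b i ^ 2 = 1) (μ : ℝ)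
    (heig : S'.mulVec b = μ • b)
    (hmin : ∀ v : Fin d → ℝ, μ * (∑ i, v i ^ 2) ≤ v ⬝ᵥ S'.mulVec v) :
    let S : Matrix (Fin d) (Fin d) ℝ := -((2 * (d : ℝ))⁻¹) • Matrix.vecMulVec a a
    Real.sqrt (1 - (∑ i, a i * b i) ^ 2) ≤ 4 * d * matrixOpNorm (S' - S) ∧
      (16 * (d : ℝ) ^ 2 * matrixOpNorm (S' - S) ^ 2 ≤ 1 →
        min (∑ i, (a i - b i) ^ 2) (∑ i, (a i + b i) ^ 2) ≤
          32 * (d : ℝ) ^ 2 * matrixOpNorm (S' - S) ^ 2) := by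
  intro S
  have hSdef : S = -((2 * (d : ℝ))⁻¹) • Matrix.vecMulVec a a := rfl
  set E : Matrix (Fin d) (Fin d) ℝ := S' - S with hE
  set ε : ℝ := matrixOpNorm E with hεdef
  have hε0 : 0 ≤ ε := norm_nonneg _
  set t : ℝ := ∑ i, a i * b i with ht
  have hd1 : (1:ℝ) ≤ d := by exact_mod_cast hd
  have hd0 : (0:ℝ) < 2 * d := by linarith
  -- Cauchy–Schwarz: t² ≤ 1
  have ht2 : t^2 ≤ 1 := by
    have h := Finset.sum_mul_sq_le_sq_mul_sq Finset.univ a b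
    rw [ha, hb] at h; simpa [← ht] using h
  -- the matrix S acting on vectors
  have hSmul : ∀ v : Fin d → ℝ, ∀ i,
      S.mulVec v i = (-(2*(d:ℝ))⁻¹ * (∑ j, a j * v j)) * a i := by
    intro v i
    calc S.mulVec v i = ∑ j, (-(2*(d:ℝ))⁻¹ * (a i * a j)) * v j := by
          simp [hSdef, Matrix.mulVec, dotProduct, Matrix.vecMulVec_apply]
      _ = (-(2*(d:ℝ))⁻¹ * (∑ j, a j * v j)) * a i := by
          rw [Finset.mul_sum, Finset.sum_mul]
          exact Finset.sum_congr rfl fun j _ => by ring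
  have haa : ∑ j, a j * a j = 1 := by
    rw [← ha]; exact Finset.sum_congr rfl fun j _ => (sq (a j)).symm
  -- E applied to b, entrywise
  have hEbi : ∀ i, E.mulVec b i = μ * b i + (2*(d:ℝ))⁻¹ * t * a i := by
    intro i
    have h1 : E.mulVec b i = S'.mulVec b i - S.mulVec b i := by
      rw [hE, Matrix.sub_mulVec]; rfl
    rw [h1, heig, hSmul b i, ← ht]
    simp only [Pi.smul_apply, smul_eq_mul]
    ring
  have hEai : ∀ i, E.mulVec a i = S'.mulVec a i - (-(2*(d:ℝ))⁻¹) * a i := by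
    intro i
    have h1 : E.mulVec a i = S'.mulVec a i - S.mulVec a i := by
      rw [hE, Matrix.sub_mulVec]; rfl
    rw [h1, hSmul a i, haa]; ring
  -- bound on μ
  have hEa2 : ∑ i, (E.mulVec a i)^2 ≤ ε^2 := sqSumBound E a ha
  have haEa : ∑ i, a i * E.mulVec a i ≤ ε := by
    have h := Finset.sum_mul_sq_le_sq_mul_sq Finset.univ a (fun i => E.mulVec a i)
    rw [ha, one_mul] at h
    nlinarith [h, hEa2, sq_nonneg (∑ i, a i * E.mulVec a i)]
  have hmu : μ ≤ ε - (2*(d:ℝ))⁻¹ := by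
    have h := hmin a
    rw [ha, mul_one] at h
    have h2 : a ⬝ᵥ S'.mulVec a = ∑ i, a i * S'.mulVec a i := rfl
    have h3 : ∑ i, a i * S'.mulVec a i
        = (∑ i, a i * E.mulVec a i) + (-(2*(d:ℝ))⁻¹) * (∑ i, a i * a i) := by
      rw [Finset.mul_sum, ← Finset.sum_add_distrib]
      refine Finset.sum_congr rfl fun i _ => ?_
      rw [hEai i]; ring
    rw [h2, h3, haa, mul_one] at h
    linarith [haEa]
  -- the orthogonal component w = b - t a
  have hwa : ∑ i, (b i - t * a i) * a i = 0 := by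
    have h1 : ∀ i ∈ Finset.univ, (b i - t * a i) * a i = a i * b i - t * (a i * a i) :=
      fun i _ => by ring
    rw [Finset.sum_congr rfl h1, Finset.sum_sub_distrib, ← Finset.mul_sum, haa, ← ht]; ring
  have hwb : ∑ i, (b i - t * a i) * b i = 1 - t^2 := by
    have h1 : ∀ i ∈ Finset.univ, (b i - t * a i) * b i = b i ^ 2 - t * (a i * b i) :=
      fun i _ => by ring
    rw [Finset.sum_congr rfl h1, Finset.sum_sub_distrib, ← Finset.mul_sum, hb, ← ht]; ring
  have hw2 : ∑ i, (b i - t * a i)^2 = 1 - t^2 := by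
    have h1 : ∀ i ∈ Finset.univ, (b i - t * a i)^2
        = (b i - t * a i) * b i - t * ((b i - t * a i) * a i) := fun i _ => by ring
    rw [Finset.sum_congr rfl h1, Finset.sum_sub_distrib, ← Finset.mul_sum, hwb, hwa]; ring
  have hwEb : ∑ i, (b i - t * a i) * E.mulVec b i = μ * (1 - t^2) := by
    have h1 : ∀ i ∈ Finset.univ, (b i - t * a i) * E.mulVec b i
        = μ * ((b i - t * a i) * b i) + ((2*(d:ℝ))⁻¹ * t) * ((b i - t * a i) * a i) := by
      intro i _; rw [hEbi i]; ring
    rw [Finset.sum_congr rfl h1, Finset.sum_add_distrib, ← Finset.mul_sum, ← Finset.mul_sum,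
      hwb, hwa]; ring
  have hEb2 : ∑ i, (E.mulVec b i)^2 ≤ ε^2 := sqSumBound E b hb
  -- Cauchy–Schwarz on w and Eb
  have hcs : (μ * (1 - t^2))^2 ≤ (1 - t^2) * ε^2 := by
    have h := Finset.sum_mul_sq_le_sq_mul_sq Finset.univ
      (fun i => b i - t * a i) (fun i => E.mulVec b i)
    rw [hwEb, hw2] at h
    nlinarith [hEb2, ht2]
  clear_value S E ε
  set s : ℝ := Real.sqrt (1 - t^2) with hs
  have hs0 : 0 ≤ s := Real.sqrt_nonneg _
  have hs2 : s^2 = 1 - t^2 := Real.sq_sqrt (by nlinarith)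
  have hs1 : s ≤ 1 := by nlinarith [hs2, sq_nonneg (s - 1), ht2]
  clear_value s t
  have hneg : -(μ * (1 - t^2)) ≤ s * ε := by
    have h1 : 0 ≤ s * ε := mul_nonneg hs0 hε0
    nlinarith [hcs, hs2, sq_nonneg (s * ε + μ * (1 - t^2))]
  -- key inequality
  have hkey : s^2 ≤ 4 * d * (s * ε) := by
    have h1 : ((2*(d:ℝ))⁻¹ - ε) * s^2 ≤ -μ * s^2 := by
      have := mul_le_mul_of_nonneg_right (by linarith [hmu] : (2*(d:ℝ))⁻¹ - ε ≤ -μ)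
        (sq_nonneg s)
      linarith
    have h2 : -μ * s^2 ≤ s * ε := by rw [hs2]; linarith [hneg]
    have h3 : s^2 ≤ s := by nlinarith
    have h4 : (2*(d:ℝ))⁻¹ * s^2 ≤ 2 * (s * ε) := by nlinarith [mul_le_mul_of_nonneg_right h3 hε0]
    have h5 := mul_le_mul_of_nonneg_left h4 (le_of_lt hd0)
    rw [mul_inv_cancel_left₀ (ne_of_gt hd0)] at h5
    linarith
  have goal1 : s ≤ 4 * d * ε := by
    rcases eq_or_lt_of_le hs0 with h | h
    · rw [← h]; positivity
    · have h2 : s * s ≤ (4 * d * ε) * s := by nlinarith [hkey]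
      exact le_of_mul_le_mul_right h2 h
  constructor
  · exact goal1
  · intro _
    have hab1 : ∑ i, (a i - b i)^2 = 2 - 2*t := by
      have h1 : ∀ i ∈ Finset.univ, (a i - b i)^2 = a i^2 + b i^2 - 2*(a i * b i) :=
        fun i _ => by ring
      rw [Finset.sum_congr rfl h1, Finset.sum_sub_distrib, Finset.sum_add_distrib,
        ← Finset.mul_sum, ha, hb, ← ht]; ring
    have hab2 : ∑ i, (a i + b i)^2 = 2 + 2*t := by
      have h1 : ∀ i ∈ Finset.univ, (a i + b i)^2 = a i^2 + b i^2 + 2*(a i * b i) :=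
        fun i _ => by ring
      rw [Finset.sum_congr rfl h1, Finset.sum_add_distrib, Finset.sum_add_distrib,
        ← Finset.mul_sum, ha, hb, ← ht]; ring
    rw [hab1, hab2]
    have h1 : 1 - t^2 ≤ 16 * (d:ℝ)^2 * ε^2 := by nlinarith [goal1, hs0, hs2]
    have htm1 : -1 ≤ t := by nlinarith
    have ht1 : t ≤ 1 := by nlinarith
    rcases le_total t 0 with hts | hts
    · refine le_trans (min_le_right _ _) ?_
      nlinarith [mul_nonneg (neg_nonneg.2 hts) (by linarith : (0:ℝ) ≤ 1 + t)]
    · refine le_trans (min_le_left _ _) ?_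
      nlinarith [mul_nonneg hts (by linarith : (0:ℝ) ≤ 1 - t)]
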